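/- For every w ∈ W^B_m and every 1 ≤ k ≤ m, the identity φ_w x_k = x_{w(k)} φ_w holds in the VV algebra W_ν, where W^B_m acts on indices as signed permutations and one sets x_{1−l} := −x_l for the negative indices. -/

import Mathlib

open scoped TensorProduct

noncomputable section
namespace VVB

variable (k : Type) [Field k]

/-- The vertex set `I` of the quiver `Γ`: the `ℤ ⋊ ℤ₂`-orbit of `λ`. -/
def Iset (p lam : kˣ) : Set kˣ := {x | ∃ n : ℤ, x = p ^ (2 * n) * lam ∨ x = p ^ (2 * n) * lam⁻¹}

/-- The positive half `I⁺` of the vertex set. -/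
def Iplus (p lam : kˣ) : Set kˣ := {x | ∃ n : ℤ, x = p ^ (2 * n) * lam}

/-- The standing assumptions on the parameters: `char k ≠ 2`,
`p` is not a power of `q` and vice versa, `p ≠ ±1`, `±1 ∉ I` and `±p, ±q ∉ I`. -/
def Setting (p q lam : kˣ) : Prop :=
  ringChar k ≠ 2 ∧ (∀ n : ℤ, p ≠ q ^ n) ∧ (∀ n : ℤ, q ≠ p ^ n) ∧
  p ≠ 1 ∧ p ≠ -1 ∧ (1 : kˣ) ∉ Iset k p lam ∧ (-1 : kˣ) ∉ Iset k p lam ∧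
  p ∉ Iset k p lam ∧ (-p) ∉ Iset k p lam ∧ q ∉ Iset k p lam ∧ (-q) ∉ Iset k p lam

open Classical in
/-- The number of arrows `i → j` in the quiver `Γ` (there is one arrow `p²i → i` for each `i`). -/
def nArr (p i j : kˣ) : ℕ := if i = p ^ 2 * j then 1 else 0

/-- `^θℕI`: θ-symmetric finitely supported functions supported on `I`. -/
def ThetaNNI (p lam : kˣ) : Set (kˣ →₀ ℕ) :=
  {ν | (∀ i ∈ ν.support, (i : kˣ) ∈ Iset k p lam) ∧ ∀ i : kˣ, ν i = ν i⁻¹}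

/-- `ℕI⁺`: finitely supported functions supported on `I⁺`. -/
def NNIplus (p lam : kˣ) : Set (kˣ →₀ ℕ) :=
  {ν | ∀ i ∈ ν.support, (i : kˣ) ∈ Iplus k p lam}

/-- The height `|ν|`. -/
def ht (ν : kˣ →₀ ℕ) : ℕ := ν.sum fun _ n => n

open Classical in
/-- The positive part `ν⁺` of `ν ∈ ^θℕI`. -/
def posPart (p lam : kˣ) (ν : kˣ →₀ ℕ) : kˣ →₀ ℕ := ν.filter fun x => x ∈ Iplus k p lam

/-- The condition defining `^θI^ν`. -/
def seqCond (ν : kˣ →₀ ℕ) {m : ℕ} (i : Fin m → kˣ) : Prop :=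
  ν = ∑ l, (Finsupp.single (i l) 1 + Finsupp.single (i l)⁻¹ 1)

/-- `^θI^ν`, the sequences `i` with `Σ (i_k + θ(i_k)) = ν`. -/
def ThetaSeq (ν : kˣ →₀ ℕ) (m : ℕ) : Type := {i : Fin m → kˣ // seqCond k ν i}

/-- The condition defining `I^ν` (for KLR algebras). -/
def seqCondA (ν : kˣ →₀ ℕ) {m : ℕ} (i : Fin m → kˣ) : Prop :=
  ν = ∑ l, Finsupp.single (i l) 1

/-- `I^ν` for the KLR algebra. -/
def SeqA (ν : kˣ →₀ ℕ) (m : ℕ) : Type := {i : Fin m → kˣ // seqCondA k ν i}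

lemma seqCond_mem_support {ν : kˣ →₀ ℕ} {m : ℕ} {i : Fin m → kˣ}
    (h : seqCond k ν i) (l : Fin m) : i l ∈ ν.support := by
  rw [Finsupp.mem_support_iff, h, Finsupp.finset_sum_apply]
  have hpos : 0 < ∑ l' : Fin m,
      ((Finsupp.single (i l') 1 + Finsupp.single (i l')⁻¹ 1 : kˣ →₀ ℕ) (i l)) := by
    refine Finset.sum_pos' (fun _ _ => Nat.zero_le _) ⟨l, Finset.mem_univ l, ?_⟩
    have h1 : ((Finsupp.single (i l) 1 : kˣ →₀ ℕ)) (i l) = 1 := Finsupp.single_eq_same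
    simp only [Finsupp.add_apply]
    omega
  omega

lemma seqCondA_mem_support {ν : kˣ →₀ ℕ} {m : ℕ} {i : Fin m → kˣ}
    (h : seqCondA k ν i) (l : Fin m) : i l ∈ ν.support := by
  rw [Finsupp.mem_support_iff, h, Finsupp.finset_sum_apply]
  have hpos : 0 < ∑ l' : Fin m, ((Finsupp.single (i l') 1 : kˣ →₀ ℕ) (i l)) := by
    refine Finset.sum_pos' (fun _ _ => Nat.zero_le _) ⟨l, Finset.mem_univ l, ?_⟩
    have h1 : ((Finsupp.single (i l) 1 : kˣ →₀ ℕ)) (i l) = 1 := Finsupp.single_eq_same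
    omega
  omega

instance {ν : kˣ →₀ ℕ} {m : ℕ} : Finite (ThetaSeq k ν m) := by
  refine Finite.of_injective
    (fun i : ThetaSeq k ν m => fun l : Fin m =>
      (⟨i.1 l, seqCond_mem_support k i.2 l⟩ : ν.support)) ?_
  intro a b hab
  apply Subtype.ext; funext l
  exact congrArg Subtype.val (congrFun hab l)

instance {ν : kˣ →₀ ℕ} {m : ℕ} : Finite (SeqA k ν m) := by
  refine Finite.of_injective
    (fun i : SeqA k ν m => fun l : Fin m =>
      (⟨i.1 l, seqCondA_mem_support k i.2 l⟩ : ν.support)) ?_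
  intro a b hab
  apply Subtype.ext; funext l
  exact congrArg Subtype.val (congrFun hab l)

noncomputable instance {ν : kˣ →₀ ℕ} {m : ℕ} : Fintype (ThetaSeq k ν m) := Fintype.ofFinite _
noncomputable instance {ν : kˣ →₀ ℕ} {m : ℕ} : Fintype (SeqA k ν m) := Fintype.ofFinite _

/-- position `k` for `σ_k`-type generators (0-indexed). -/
def c0 {m : ℕ} (c : Fin (m - 1)) : Fin m := ⟨c.1, by have := c.isLt; omega⟩
/-- position `k+1` for `σ_k`-type generators (0-indexed). -/
def c1 {m : ℕ} (c : Fin (m - 1)) : Fin m := ⟨c.1 + 1, by have := c.isLt; omega⟩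

/-- The action of the transposition `s_k` on sequences. -/
def swapT {m : ℕ} (c : Fin (m - 1)) (i : Fin m → kˣ) : Fin m → kˣ :=
  i ∘ Equiv.swap (c0 c) (c1 c)

lemma seqCond_swap {ν : kˣ →₀ ℕ} {m : ℕ} {c : Fin (m - 1)} {i : Fin m → kˣ}
    (h : seqCond k ν i) : seqCond k ν (swapT k c i) := by
  unfold seqCond at h ⊢
  rw [h]
  exact (Equiv.sum_comp (Equiv.swap (c0 c) (c1 c))
    (fun l => Finsupp.single (i l) 1 + Finsupp.single (i l)⁻¹ 1)).symm

lemma seqCondA_swap {ν : kˣ →₀ ℕ} {m : ℕ} {c : Fin (m - 1)} {i : Fin m → kˣ}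
    (h : seqCondA k ν i) : seqCondA k ν (swapT k c i) := by
  unfold seqCondA at h ⊢
  rw [h]
  exact (Equiv.sum_comp (Equiv.swap (c0 c) (c1 c)) (fun l => Finsupp.single (i l) 1)).symm

/-- The action of `π` on sequences: invert the first entry. -/
def flipT {m : ℕ} (hm : 0 < m) (i : Fin m → kˣ) : Fin m → kˣ :=
  Function.update i ⟨0, hm⟩ (i ⟨0, hm⟩)⁻¹

lemma seqCond_flip {ν : kˣ →₀ ℕ} {m : ℕ} (hm : 0 < m) {i : Fin m → kˣ}
    (h : seqCond k ν i) : seqCond k ν (flipT k hm i) := by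
  unfold seqCond at h ⊢
  rw [h]
  refine Finset.sum_congr rfl fun l _ => ?_
  rcases eq_or_ne l ⟨0, hm⟩ with hl | hl
  · subst hl; simp [flipT, inv_inv, add_comm]
  · simp [flipT, Function.update_of_ne hl]


/-! ## The VV algebras and KLR algebras, by generators and relations -/

/-- Generators of the VV algebra `W_ν` (with `|ν| = 2m`). -/
inductive Gen (ν : kˣ →₀ ℕ) (m : ℕ) : Type
  | e : ThetaSeq k ν m → Gen ν m
  | x : Fin m → Gen ν m
  | sig : Fin (m - 1) → Gen ν m
  | pii : 0 < m → Gen ν m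

/-- Generators of the KLR algebra `R_ν` (with `|ν| = m`). -/
inductive GenA (ν : kˣ →₀ ℕ) (m : ℕ) : Type
  | e : SeqA k ν m → GenA ν m
  | x : Fin m → GenA ν m
  | sig : Fin (m - 1) → GenA ν m

abbrev FW (ν : kˣ →₀ ℕ) (m : ℕ) := FreeAlgebra k (Gen k ν m)
abbrev FA (ν : kˣ →₀ ℕ) (m : ℕ) := FreeAlgebra k (GenA k ν m)

def fE {ν : kˣ →₀ ℕ} {m : ℕ} (i : ThetaSeq k ν m) : FW k ν m := FreeAlgebra.ι k (Gen.e i)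
def fX {ν : kˣ →₀ ℕ} {m : ℕ} (l : Fin m) : FW k ν m := FreeAlgebra.ι k (Gen.x l)
def fS {ν : kˣ →₀ ℕ} {m : ℕ} (c : Fin (m - 1)) : FW k ν m := FreeAlgebra.ι k (Gen.sig c)
def fP {ν : kˣ →₀ ℕ} {m : ℕ} (h : 0 < m) : FW k ν m := FreeAlgebra.ι k (Gen.pii h)

def gE {ν : kˣ →₀ ℕ} {m : ℕ} (i : SeqA k ν m) : FA k ν m := FreeAlgebra.ι k (GenA.e i)
def gX {ν : kˣ →₀ ℕ} {m : ℕ} (l : Fin m) : FA k ν m := FreeAlgebra.ι k (GenA.x l)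
def gS {ν : kˣ →₀ ℕ} {m : ℕ} (c : Fin (m - 1)) : FA k ν m := FreeAlgebra.ι k (GenA.sig c)

open Classical in
/-- The polynomial `Q_{a,b}(u,v)`. -/
def Qp {R : Type} [Ring R] (p a b : kˣ) (u v : R) : R :=
  if a = b then 0 else (-1 : R) ^ (nArr k p a b) * (u - v) ^ (nArr k p a b + nArr k p b a)

open Classical in
/-- The divided difference `(Q_{a,b}(x',x) - Q_{a,b}(x',x'')) / (x - x'')`, where
`A = x' - x` and `B = x' - x''`. -/
def dQ {R : Type} [Ring R] (p a b : kˣ) (A B : R) : R :=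
  if a = b then 0
  else -((-1 : R) ^ (nArr k p a b) *
      ∑ t ∈ Finset.range (nArr k p a b + nArr k p b a),
        A ^ t * B ^ (nArr k p a b + nArr k p b a - 1 - t))

open Classical in
/-- The defining relations of the VV algebra `W_ν` (in the setting `±p, ±q ∉ I`, so that
`π² e(i) = e(i)` and `(σ₁π)² e(i) = (πσ₁)² e(i)`). -/
inductive Rel (p : kˣ) (ν : kˣ →₀ ℕ) (m : ℕ) : FW k ν m → FW k ν m → Prop
  | ee (i j) : Rel p ν m (fE k i * fE k j) (if i = j then fE k i else 0)
  | sume : Rel p ν m (∑ i : ThetaSeq k ν m, fE k i) 1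
  | xe (l i) : Rel p ν m (fX k l * fE k i) (fE k i * fX k l)
  | xx (l l') : Rel p ν m (fX k l * fX k l') (fX k l' * fX k l)
  | se (c i) : Rel p ν m (fS k c * fE k i) (fE k ⟨swapT k c i.1, seqCond_swap k i.2⟩ * fS k c)
  | ss (c i) : Rel p ν m (fS k c * fS k c * fE k i)
      (Qp k p (i.1 (c0 c)) (i.1 (c1 c)) (fX k (c1 c)) (fX k (c0 c)) * fE k i)
  | scomm (c c' : Fin (m - 1)) (h : c.1 + 1 ≠ c'.1 ∧ c'.1 + 1 ≠ c.1) :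
      Rel p ν m (fS k c * fS k c') (fS k c' * fS k c)
  | braid (c c' : Fin (m - 1)) (h : c'.1 = c.1 + 1) (i) :
      Rel p ν m (fS k c' * fS k c * fS k c' * fE k i)
        (fS k c * fS k c' * fS k c * fE k i +
          (if i.1 (c0 c) = i.1 (c1 c') then
             dQ k p (i.1 (c0 c)) (i.1 (c1 c))
               (fX k (c1 c) - fX k (c0 c)) (fX k (c1 c) - fX k (c1 c'))
           else 0) * fE k i)
  | sx (c : Fin (m - 1)) (l : Fin m) (i) :
      Rel p ν m (fS k c * fX k l * fE k i)
        (fX k (Equiv.swap (c0 c) (c1 c) l) * fS k c * fE k i +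
          (if l = c0 c ∧ i.1 (c0 c) = i.1 (c1 c) then -(fE k i)
           else if l = c1 c ∧ i.1 (c0 c) = i.1 (c1 c) then fE k i else 0))
  | pe (h : 0 < m) (i) :
      Rel p ν m (fP k h * fE k i) (fE k ⟨flipT k h i.1, seqCond_flip k h i.2⟩ * fP k h)
  | px0 (h : 0 < m) : Rel p ν m (fP k h * fX k ⟨0, h⟩) (-(fX k ⟨0, h⟩ * fP k h))
  | px (h : 0 < m) (l : Fin m) (hl : l.1 ≠ 0) : Rel p ν m (fP k h * fX k l) (fX k l * fP k h)
  | ps (h : 0 < m) (c : Fin (m - 1)) (hc : c.1 ≠ 0) : Rel p ν m (fP k h * fS k c) (fS k c * fP k h)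
  | pp (h : 0 < m) (i) : Rel p ν m (fP k h * fP k h * fE k i) (fE k i)
  | pspsp (h : 0 < m) (c : Fin (m - 1)) (hc : c.1 = 0) (i) :
      Rel p ν m (fS k c * fP k h * (fS k c * fP k h) * fE k i)
                (fP k h * fS k c * (fP k h * fS k c) * fE k i)

open Classical in
/-- The defining relations of the KLR algebra `R_ν`. -/
inductive RelA (p : kˣ) (ν : kˣ →₀ ℕ) (m : ℕ) : FA k ν m → FA k ν m → Prop
  | ee (i j) : RelA p ν m (gE k i * gE k j) (if i = j then gE k i else 0)
  | sume : RelA p ν m (∑ i : SeqA k ν m, gE k i) 1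
  | xe (l i) : RelA p ν m (gX k l * gE k i) (gE k i * gX k l)
  | xx (l l') : RelA p ν m (gX k l * gX k l') (gX k l' * gX k l)
  | se (c i) : RelA p ν m (gS k c * gE k i) (gE k ⟨swapT k c i.1, seqCondA_swap k i.2⟩ * gS k c)
  | ss (c i) : RelA p ν m (gS k c * gS k c * gE k i)
      (Qp k p (i.1 (c0 c)) (i.1 (c1 c)) (gX k (c1 c)) (gX k (c0 c)) * gE k i)
  | scomm (c c' : Fin (m - 1)) (h : c.1 + 1 ≠ c'.1 ∧ c'.1 + 1 ≠ c.1) :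
      RelA p ν m (gS k c * gS k c') (gS k c' * gS k c)
  | braid (c c' : Fin (m - 1)) (h : c'.1 = c.1 + 1) (i) :
      RelA p ν m (gS k c' * gS k c * gS k c' * gE k i)
        (gS k c * gS k c' * gS k c * gE k i +
          (if i.1 (c0 c) = i.1 (c1 c') then
             dQ k p (i.1 (c0 c)) (i.1 (c1 c))
               (gX k (c1 c) - gX k (c0 c)) (gX k (c1 c) - gX k (c1 c'))
           else 0) * gE k i)
  | sx (c : Fin (m - 1)) (l : Fin m) (i) :
      RelA p ν m (gS k c * gX k l * gE k i)
        (gX k (Equiv.swap (c0 c) (c1 c) l) * gS k c * gE k i +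
          (if l = c0 c ∧ i.1 (c0 c) = i.1 (c1 c) then -(gE k i)
           else if l = c1 c ∧ i.1 (c0 c) = i.1 (c1 c) then gE k i else 0))

/-- The VV algebra `W_ν` with `|ν| = 2m`. -/
abbrev VA (p : kˣ) (ν : kˣ →₀ ℕ) (m : ℕ) : Type := RingQuot (Rel k p ν m)

/-- The KLR algebra `R_ν` with `|ν| = m`. -/
abbrev RA (p : kˣ) (ν : kˣ →₀ ℕ) (m : ℕ) : Type := RingQuot (RelA k p ν m)

def eW {p : kˣ} {ν : kˣ →₀ ℕ} {m : ℕ} (i : ThetaSeq k ν m) : VA k p ν m :=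
  RingQuot.mkAlgHom k (Rel k p ν m) (fE k i)
def xW {p : kˣ} {ν : kˣ →₀ ℕ} {m : ℕ} (l : Fin m) : VA k p ν m :=
  RingQuot.mkAlgHom k (Rel k p ν m) (fX k l)
def sW {p : kˣ} {ν : kˣ →₀ ℕ} {m : ℕ} (c : Fin (m - 1)) : VA k p ν m :=
  RingQuot.mkAlgHom k (Rel k p ν m) (fS k c)
def pW {p : kˣ} {ν : kˣ →₀ ℕ} {m : ℕ} (h : 0 < m) : VA k p ν m :=
  RingQuot.mkAlgHom k (Rel k p ν m) (fP k h)

def eR {p : kˣ} {ν : kˣ →₀ ℕ} {m : ℕ} (i : SeqA k ν m) : RA k p ν m :=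
  RingQuot.mkAlgHom k (RelA k p ν m) (gE k i)
def xR {p : kˣ} {ν : kˣ →₀ ℕ} {m : ℕ} (l : Fin m) : RA k p ν m :=
  RingQuot.mkAlgHom k (RelA k p ν m) (gX k l)
def sR {p : kˣ} {ν : kˣ →₀ ℕ} {m : ℕ} (c : Fin (m - 1)) : RA k p ν m :=
  RingQuot.mkAlgHom k (RelA k p ν m) (gS k c)


/-! ## The Weyl group of type B, realized as "mirror" permutations of `ℤ`
(commuting with `z ↦ 1 - z`), with negative positions labelled `0, -1, -2, …`,
the mirror of position `l` being `1 - l`. -/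

open Classical in
/-- The generator `s_a` of `W^B_m` (`a = 0` gives `s₀`, which swaps positions `1` and `0 = 1-1`;
`a = i ≥ 1` gives `s_i`, which swaps `i ↔ i+1` and `1-i ↔ -i`). -/
def sB (a : ℕ) : Equiv.Perm ℤ :=
  if a = 0 then Equiv.swap 0 1
  else Equiv.swap (a : ℤ) (a + 1) * Equiv.swap (1 - (a : ℤ)) (-(a : ℤ))

/-- The Weyl group `W^B_m` of type `B_m`, generated by `s₀, …, s_{m-1}`. -/
def WBgrp (m : ℕ) : Subgroup (Equiv.Perm ℤ) :=
  Subgroup.closure {g | ∃ a : Fin m, g = sB a.1}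

/-- The product of the generators along a word. -/
def wordB (m : ℕ) (l : List (Fin m)) : Equiv.Perm ℤ := (l.map fun a => sB a.1).prod

/-- `l` is a reduced expression for `w` in `W^B_m`. -/
def IsRedWord (m : ℕ) (w : Equiv.Perm ℤ) (l : List (Fin m)) : Prop :=
  wordB m l = w ∧ ∀ l' : List (Fin m), wordB m l' = w → l.length ≤ l'.length

/-- The length of `w ∈ W^B_m`. -/
def lenB (m : ℕ) (w : Equiv.Perm ℤ) : ℕ :=
  sInf {c | ∃ l : List (Fin m), l.length = c ∧ wordB m l = w}

/-- The symmetric group `S_{m}` (resp. various parabolic subgroups), inside `W^B`: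
the subgroup generated by the `s_a` with `a ∈ A`. -/
def subGrp (A : Set ℕ) : Subgroup (Equiv.Perm ℤ) :=
  Subgroup.closure {g | ∃ a ∈ A, g = sB a}

/-- The subgroup `S_m × S_n ≤ W^B_{m+n}` (also `≤ S_{m+n}`), generated by all
`s_a`, `1 ≤ a ≤ m+n-1`, except `s_m`. -/
def SmSn (m n : ℕ) : Subgroup (Equiv.Perm ℤ) :=
  subGrp {a | 1 ≤ a ∧ a ≤ m + n - 1 ∧ a ≠ m}

/-- The symmetric group `S_N ≤ W^B_N`, generated by `s_1, …, s_{N-1}`. -/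
def SgrpB (N : ℕ) : Subgroup (Equiv.Perm ℤ) := subGrp {a | 1 ≤ a ∧ a ≤ N - 1}

/-- Type A length: minimal length of a word in the generators `s_a`, `1 ≤ a ≤ N-1`. -/
def lenA (N : ℕ) (w : Equiv.Perm ℤ) : ℕ :=
  sInf {c | ∃ l : List (Fin N), (∀ a ∈ l, 1 ≤ a.1) ∧ l.length = c ∧ wordB N l = w}

/-- Minimal-length left coset representatives of `S_m × S_n` in `S_{m+n}`
(the set `𝔖_{m,n}`). -/
def DA (m n : ℕ) : Set (Equiv.Perm ℤ) :=
  {w | w ∈ SgrpB (m + n) ∧ ∀ h ∈ SmSn m n, lenA (m + n) w ≤ lenA (m + n) (w * h)}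

/-- Minimal-length left coset representatives of `S_m × S_n` in `W^B_{m+n}`
(the set `D(W^B_{m+n}/(S_m × S_n))`). -/
def DB (m n : ℕ) : Set (Equiv.Perm ℤ) :=
  {w | w ∈ WBgrp (m + n) ∧ ∀ h ∈ SmSn m n, lenB (m + n) w ≤ lenB (m + n) (w * h)}

/-- The image of the generator `s_a` in the VV algebra: `σ₀ := π`, `σ_a` for `a ≥ 1`. -/
def genW {p : kˣ} {ν : kˣ →₀ ℕ} {m : ℕ} (a : Fin m) : VA k p ν m :=
  if h : a.1 = 0 then pW k a.pos else sW k ⟨a.1 - 1, by have := a.isLt; omega⟩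

/-- `σ_w` for a word `w = s_{a₁} ⋯ s_{a_r}`. -/
def sigWord {p : kˣ} {ν : kˣ →₀ ℕ} {m : ℕ} (l : List (Fin m)) : VA k p ν m :=
  (l.map (genW k)).prod

open Classical in
/-- The intertwiner `φ_c` (`c` a 0-indexed `σ`-index) of the VV algebra. -/
def phiS {p : kˣ} {ν : kˣ →₀ ℕ} {m : ℕ} (c : Fin (m - 1)) : VA k p ν m :=
  ∑ i : ThetaSeq k ν m,
    (if i.1 (c0 c) = i.1 (c1 c) then sW k c * xW k (c0 c) - xW k (c0 c) * sW k c else sW k c) *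
      eW k i

/-- The intertwiner `φ_a` attached to the generator `s_a` of `W^B_m`: `φ₀ = π`. -/
def phiGen {p : kˣ} {ν : kˣ →₀ ℕ} {m : ℕ} (a : Fin m) : VA k p ν m :=
  if h : a.1 = 0 then pW k a.pos else phiS k ⟨a.1 - 1, by have := a.isLt; omega⟩

/-- `φ_w` along a word for `w`. -/
def phiWord {p : kˣ} {ν : kˣ →₀ ℕ} {m : ℕ} (l : List (Fin m)) : VA k p ν m :=
  (l.map (phiGen k)).prod

open Classical in
/-- The intertwiner `φ_c` of the KLR algebra. -/
def phiSA {p : kˣ} {ν : kˣ →₀ ℕ} {m : ℕ} (c : Fin (m - 1)) : RA k p ν m :=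
  ∑ i : SeqA k ν m,
    (if i.1 (c0 c) = i.1 (c1 c) then sR k c * xR k (c0 c) - xR k (c0 c) * sR k c else sR k c) *
      eR k i

/-- `φ_w` along a word of `σ`-indices, in the KLR algebra. -/
def phiWordA {p : kˣ} {ν : kˣ →₀ ℕ} {m : ℕ} (l : List (Fin (m - 1))) : RA k p ν m :=
  (l.map (phiSA k)).prod

open Classical in
/-- The signed variable `x_j`, `j ∈ ℤ`, with `x_{1-l} := -x_l` (0-indexed: `x_j = xW (j-1)`
for `1 ≤ j ≤ m`). -/
def xSigned (p : kˣ) (ν : kˣ →₀ ℕ) (m : ℕ) (j : ℤ) : VA k p ν m :=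
  if h : 1 ≤ j ∧ j ≤ (m : ℤ) then xW k ⟨(j - 1).toNat, by obtain ⟨h1, h2⟩ := h; omega⟩
  else if h' : 1 - (m : ℤ) ≤ j ∧ j ≤ 0 then -xW k ⟨(-j).toNat, by obtain ⟨h1, h2⟩ := h'; omega⟩
  else 0

open Classical in
/-- `σ_{|a|}` for a (possibly non-positive) index `a`, with `σ₀ := π`: for `a ≥ 1` this is
`σ_a`, for `a ≤ 0` it is `σ_{1-a-1} = σ_{-a}` (with `σ₀ = π` when `a = 0`). -/
def sigAbs (p : kˣ) (ν : kˣ →₀ ℕ) (m : ℕ) (a : ℤ) : VA k p ν m :=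
  if a = 0 then (if h : 0 < m then pW k h else 0)
  else if h : 1 ≤ a.natAbs ∧ a.natAbs ≤ m - 1 then sW k ⟨a.natAbs - 1, by obtain ⟨h1, h2⟩ := h; omega⟩
  else 0

/-- The block permutation exchanging the blocks `[o+1, o+a]` and `[o+a+1, o+a+b]` of positions,
extended mirror-symmetrically (`w(1-z) = 1-w(z)`). For `o = 0` this is `w[a,b] ∈ S_{a+b}`. -/
def wblkFun (o a b : ℕ) (z : ℤ) : ℤ :=
  if (o : ℤ) + 1 ≤ z ∧ z ≤ o + a then z + b
  else if (o : ℤ) + a + 1 ≤ z ∧ z ≤ o + a + b then z - a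
  else if 1 - (o : ℤ) - a ≤ z ∧ z ≤ -(o : ℤ) then z - b
  else if 1 - (o : ℤ) - a - b ≤ z ∧ z ≤ -(o : ℤ) - a then z + a
  else z

set_option maxHeartbeats 2000000 in
def wblk (o a b : ℕ) : Equiv.Perm ℤ where
  toFun := wblkFun o a b
  invFun := wblkFun o b a
  left_inv := by intro z; unfold wblkFun; split_ifs <;> omega
  right_inv := by intro z; unfold wblkFun; split_ifs <;> omega


/-! ## Auxiliary lemmas for Statement 3 -/

section Aux

variable {k} {p : kˣ} {ν : kˣ →₀ ℕ} {m : ℕ}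

lemma xW_eW (l : Fin m) (i : ThetaSeq k ν m) :
    (xW k l : VA k p ν m) * eW k i = eW k i * xW k l := by
  have h := RingQuot.mkAlgHom_rel k (Rel.xe (p := p) l i)
  rw [map_mul, map_mul] at h
  exact h

lemma xW_xW (l l' : Fin m) :
    (xW k l : VA k p ν m) * xW k l' = xW k l' * xW k l := by
  have h := RingQuot.mkAlgHom_rel k (Rel.xx (p := p) (ν := ν) l l')
  rw [map_mul, map_mul] at h
  exact h

lemma pW_xW0 (h : 0 < m) :
    (pW k h : VA k p ν m) * xW k ⟨0, h⟩ = -(xW k ⟨0, h⟩ * pW k h) := by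
  have hh := RingQuot.mkAlgHom_rel k (Rel.px0 (p := p) (ν := ν) h)
  rw [map_mul, map_neg, map_mul] at hh
  exact hh

lemma pW_xW (h : 0 < m) (l : Fin m) (hl : l.1 ≠ 0) :
    (pW k h : VA k p ν m) * xW k l = xW k l * pW k h := by
  have hh := RingQuot.mkAlgHom_rel k (Rel.px (p := p) (ν := ν) h l hl)
  rw [map_mul, map_mul] at hh
  exact hh

open Classical in
lemma sW_xW_eW (c : Fin (m - 1)) (l : Fin m) (i : ThetaSeq k ν m) :
    (sW k c : VA k p ν m) * xW k l * eW k i =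
      xW k (Equiv.swap (c0 c) (c1 c) l) * sW k c * eW k i +
      (if l = c0 c ∧ i.1 (c0 c) = i.1 (c1 c) then -(eW k i)
        else if l = c1 c ∧ i.1 (c0 c) = i.1 (c1 c) then eW k i else 0) := by
  have h := RingQuot.mkAlgHom_rel k (Rel.sx (p := p) c l i)
  simp only [map_mul, map_add, apply_ite (RingQuot.mkAlgHom k (Rel k p ν m)),
    map_neg, map_zero] at h
  exact h

/-! Abstract noncommutative ring identities used for the intertwiner computation. -/

lemma ring_aux_a {R : Type*} [Ring R] (S A B E : R)
    (hAE : A * E = E * A) (hAB : A * B = B * A)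
    (hSA : S * A * E = B * S * E - E) :
    (S * A - A * S) * A * E = B * ((S * A - A * S) * E) := by
  calc (S * A - A * S) * A * E
      = (S * A) * (A * E) - A * (S * A * E) := by noncomm_ring
    _ = (S * A) * (E * A) - A * (B * S * E - E) := by rw [hAE, hSA]
    _ = (S * A * E) * A - A * B * (S * E) + A * E := by noncomm_ring
    _ = (B * S * E - E) * A - B * A * (S * E) + A * E := by
        rw [hSA, hAB]
    _ = B * S * (E * A) - E * A - B * A * (S * E) + A * E := by noncomm_ring
    _ = B * S * (A * E) - A * E - B * A * (S * E) + A * E := by rw [← hAE]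
    _ = B * ((S * A - A * S) * E) := by noncomm_ring

lemma ring_aux_b {R : Type*} [Ring R] (S A B E : R)
    (hAE : A * E = E * A) (hBE : B * E = E * B) (hAB : A * B = B * A)
    (hSA : S * A * E = B * S * E - E) (hSB : S * B * E = A * S * E + E) :
    (S * A - A * S) * B * E = A * ((S * A - A * S) * E) := by
  have hR : A * ((S * A - A * S) * E) = B * A * (S * E) - A * A * (S * E) - A * E := by
    calc A * ((S * A - A * S) * E)
        = A * (S * A * E) - A * A * (S * E) := by noncomm_ring
      _ = A * (B * S * E - E) - A * A * (S * E) := by rw [hSA]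
      _ = (A * B) * (S * E) - A * E - A * A * (S * E) := by noncomm_ring
      _ = (B * A) * (S * E) - A * E - A * A * (S * E) := by rw [hAB]
      _ = B * A * (S * E) - A * A * (S * E) - A * E := by noncomm_ring
  rw [hR]
  calc (S * A - A * S) * B * E
      = (S * A) * (B * E) - A * (S * B * E) := by noncomm_ring
    _ = (S * A) * (E * B) - A * (A * S * E + E) := by rw [hBE, hSB]
    _ = (S * A * E) * B - A * A * (S * E) - A * E := by noncomm_ring
    _ = (B * S * E - E) * B - A * A * (S * E) - A * E := by rw [hSA]
    _ = B * S * (E * B) - E * B - A * A * (S * E) - A * E := by noncomm_ring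
    _ = B * S * (B * E) - B * E - A * A * (S * E) - A * E := by rw [← hBE]
    _ = B * (S * B * E) - B * E - A * A * (S * E) - A * E := by noncomm_ring
    _ = B * (A * S * E + E) - B * E - A * A * (S * E) - A * E := by rw [hSB]
    _ = B * A * (S * E) - A * A * (S * E) - A * E := by noncomm_ring

lemma ring_aux_other {R : Type*} [Ring R] (S A L E : R)
    (hAE : A * E = E * A) (hAL : A * L = L * A)
    (hSL : S * L * E = L * S * E) :
    (S * A - A * S) * L * E = L * ((S * A - A * S) * E) := by
  calc (S * A - A * S) * L * E
      = S * ((A * L) * E) - A * (S * L * E) := by noncomm_ring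
    _ = S * ((L * A) * E) - A * (L * S * E) := by rw [hAL, hSL]
    _ = S * L * (A * E) - (A * L) * (S * E) := by noncomm_ring
    _ = S * L * (E * A) - (L * A) * (S * E) := by rw [hAE, hAL]
    _ = (S * L * E) * A - (L * A) * (S * E) := by noncomm_ring
    _ = (L * S * E) * A - (L * A) * (S * E) := by rw [hSL]
    _ = L * S * (E * A) - (L * A) * (S * E) := by noncomm_ring
    _ = L * S * (A * E) - (L * A) * (S * E) := by rw [← hAE]
    _ = L * ((S * A - A * S) * E) := by noncomm_ring

lemma c0_ne_c1 (c : Fin (m - 1)) : c0 (m := m) c ≠ c1 c := by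
  intro h
  have := congrArg Fin.val h
  simp [c0, c1] at this

open Classical in
/-- The key intertwiner identity `φ_c x_l = x_{s_c(l)} φ_c`. -/
lemma phiS_mul_xW (c : Fin (m - 1)) (l : Fin m) :
    (phiS k c : VA k p ν m) * xW k l = xW k (Equiv.swap (c0 c) (c1 c) l) * phiS k c := by
  unfold phiS
  rw [Finset.sum_mul, Finset.mul_sum]
  refine Finset.sum_congr rfl fun i _ => ?_
  by_cases h : i.1 (c0 c) = i.1 (c1 c)
  · rw [if_pos h]
    set S := (sW k c : VA k p ν m)
    set A := (xW k (c0 c) : VA k p ν m)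
    set B := (xW k (c1 c) : VA k p ν m)
    set E := (eW k i : VA k p ν m)
    have hAE : A * E = E * A := xW_eW _ _
    have hBE : B * E = E * B := xW_eW _ _
    have hAB : A * B = B * A := xW_xW _ _
    have hSA : S * A * E = B * S * E - E := by
      have := sW_xW_eW (p := p) c (c0 c) i
      rw [if_pos ⟨rfl, h⟩, Equiv.swap_apply_left] at this
      rw [sub_eq_add_neg]; exact this
    have hSB : S * B * E = A * S * E + E := by
      have := sW_xW_eW (p := p) c (c1 c) i
      rw [if_neg (fun hc => c0_ne_c1 c hc.1.symm), if_pos ⟨rfl, h⟩,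
        Equiv.swap_apply_right] at this
      exact this
    rcases eq_or_ne l (c0 c) with rfl | hl0
    · rw [Equiv.swap_apply_left]
      calc (S * A - A * S) * E * A = (S * A - A * S) * (E * A) := by rw [mul_assoc]
        _ = (S * A - A * S) * A * E := by rw [← hAE, ← mul_assoc]
        _ = B * ((S * A - A * S) * E) := ring_aux_a S A B E hAE hAB hSA
    · rcases eq_or_ne l (c1 c) with rfl | hl1
      · rw [Equiv.swap_apply_right]
        calc (S * A - A * S) * E * B = (S * A - A * S) * (E * B) := by rw [mul_assoc]
          _ = (S * A - A * S) * B * E := by rw [← hBE, ← mul_assoc]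
          _ = A * ((S * A - A * S) * E) := ring_aux_b S A B E hAE hBE hAB hSA hSB
      · rw [Equiv.swap_apply_of_ne_of_ne hl0 hl1]
        set L := (xW k l : VA k p ν m)
        have hLE : L * E = E * L := xW_eW _ _
        have hAL : A * L = L * A := xW_xW _ _
        have hSL : S * L * E = L * S * E := by
          have := sW_xW_eW (p := p) c l i
          rw [if_neg (fun hc => hl0 hc.1), if_neg (fun hc => hl1 hc.1),
            Equiv.swap_apply_of_ne_of_ne hl0 hl1, add_zero] at this
          rw [this]
        calc (S * A - A * S) * E * L = (S * A - A * S) * (E * L) := by rw [mul_assoc]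
          _ = (S * A - A * S) * L * E := by rw [← hLE, ← mul_assoc]
          _ = L * ((S * A - A * S) * E) := ring_aux_other S A L E hAE hAL hSL
  · rw [if_neg h]
    have hfix := sW_xW_eW (p := p) c l i
    rw [if_neg (fun hc => h hc.2), if_neg (fun hc => h hc.2), add_zero] at hfix
    calc sW k c * eW k i * xW k l = sW k c * (xW k l * eW k i) := by
          rw [mul_assoc, ← xW_eW]
      _ = sW k c * xW k l * eW k i := by rw [mul_assoc]
      _ = xW k (Equiv.swap (c0 c) (c1 c) l) * (sW k c * eW k i) := by
          rw [hfix, mul_assoc]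

end Aux

section Aux2

variable {k} {p : kˣ} {ν : kˣ →₀ ℕ} {m : ℕ}

lemma xSigned_pos {j : ℤ} (h1 : 1 ≤ j) (h2 : j ≤ (m : ℤ)) :
    xSigned k p ν m j = xW k ⟨(j - 1).toNat, by omega⟩ := by
  unfold xSigned
  rw [dif_pos ⟨h1, h2⟩]

lemma xSigned_nonpos {j : ℤ} (h1 : 1 - (m : ℤ) ≤ j) (h2 : j ≤ 0) :
    xSigned k p ν m j = -xW k ⟨(-j).toNat, by omega⟩ := by
  unfold xSigned
  rw [dif_neg (by omega), dif_pos ⟨h1, h2⟩]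

lemma xSigned_zero {j : ℤ} (h : j < 1 - (m : ℤ) ∨ (m : ℤ) < j) :
    xSigned k p ν m j = 0 := by
  unfold xSigned
  rw [dif_neg (by omega), dif_neg (by omega)]

lemma sB_apply_ne {a : ℕ} (ha : a ≠ 0) (j : ℤ) :
    sB a j = if j = (a : ℤ) then (a : ℤ) + 1 else if j = (a : ℤ) + 1 then (a : ℤ)
      else if j = 1 - (a : ℤ) then -(a : ℤ) else if j = -(a : ℤ) then 1 - (a : ℤ) else j := by
  unfold sB
  rw [if_neg ha]
  simp only [Equiv.Perm.mul_apply, Equiv.swap_apply_def]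
  split_ifs <;> omega

lemma sB_zero_apply (j : ℤ) :
    sB 0 j = if j = 0 then 1 else if j = 1 then 0 else j := by
  unfold sB
  rw [if_pos rfl]
  simp only [Equiv.swap_apply_def]

lemma pW_neg_xW (h : 0 < m) (l : Fin m) (hl : l.1 ≠ 0) :
    (pW k h : VA k p ν m) * -xW k l = -xW k l * pW k h := by
  calc (pW k h : VA k p ν m) * -xW k l = -(pW k h * xW k l) := mul_neg (pW k h) (xW k l)
    _ = -(xW k l * pW k h) := by rw [pW_xW h l hl]
    _ = -xW k l * pW k h := (neg_mul (xW k l) (pW k h)).symm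

lemma phiS_mul_neg_xW (c : Fin (m - 1)) (l : Fin m) :
    (phiS k c : VA k p ν m) * -xW k l = -xW k (Equiv.swap (c0 c) (c1 c) l) * phiS k c := by
  calc (phiS k c : VA k p ν m) * -xW k l = -(phiS k c * xW k l) := mul_neg (phiS k c) (xW k l)
    _ = -(xW k (Equiv.swap (c0 c) (c1 c) l) * phiS k c) := by rw [phiS_mul_xW]
    _ = -xW k (Equiv.swap (c0 c) (c1 c) l) * phiS k c := (neg_mul (xW k (Equiv.swap (c0 c) (c1 c) l)) (phiS k c)).symm

set_option maxHeartbeats 1000000 in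
/-- Commutation of a generator intertwiner with the signed variables. -/
lemma phiGen_mul_xSigned (a : Fin m) (j : ℤ) :
    (phiGen k a : VA k p ν m) * xSigned k p ν m j =
      xSigned k p ν m (sB a.1 j) * phiGen k a := by
  by_cases ha : a.1 = 0
  · rw [phiGen, dif_pos ha, ha, sB_zero_apply]
    have hm : 0 < m := a.pos
    rcases eq_or_ne j 0 with rfl | hj0
    · rw [if_pos rfl, xSigned_nonpos (by omega) le_rfl, xSigned_pos le_rfl (by omega)]
      show pW k hm * -xW k ⟨0, hm⟩ = xW k ⟨0, hm⟩ * pW k hm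
      calc pW k hm * -xW k ⟨0, hm⟩ = -(pW k hm * xW k ⟨0, hm⟩) := mul_neg (pW k hm) (xW k ⟨0, hm⟩)
        _ = xW k ⟨0, hm⟩ * pW k hm := by rw [pW_xW0 hm, neg_neg]
    · rcases eq_or_ne j 1 with rfl | hj1
      · rw [if_neg hj0, if_pos rfl, xSigned_pos le_rfl (by omega),
          xSigned_nonpos (by omega) le_rfl]
        show pW k hm * xW k ⟨0, hm⟩ = -xW k ⟨0, hm⟩ * pW k hm
        rw [pW_xW0 hm]
        exact (neg_mul (xW k ⟨0, hm⟩) (pW k hm)).symm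
      · rw [if_neg hj0, if_neg hj1]
        rcases le_or_gt j (m : ℤ) with hjm | hjm
        · rcases le_or_gt 1 j with hj1' | hj1'
          · rw [xSigned_pos hj1' hjm]
            exact pW_xW a.pos ⟨(j - 1).toNat, by omega⟩ (show (j - 1).toNat ≠ 0 by omega)
          · rcases le_or_gt (1 - (m : ℤ)) j with hjm' | hjm'
            · rw [xSigned_nonpos hjm' (by omega)]
              exact pW_neg_xW a.pos ⟨(-j).toNat, by omega⟩ (show (-j).toNat ≠ 0 by omega)
            · rw [xSigned_zero (Or.inl (by omega)), mul_zero, zero_mul]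
        · rw [xSigned_zero (Or.inr hjm), mul_zero, zero_mul]
  · have hn1 : 1 ≤ a.1 := Nat.one_le_iff_ne_zero.mpr ha
    have hnm : a.1 < m := a.isLt
    set n := a.1 with hn
    rw [phiGen, dif_neg ha, sB_apply_ne ha]
    set c : Fin (m - 1) := ⟨n - 1, by omega⟩ with hc
    have hc0 : (c0 c : Fin m).1 = n - 1 := rfl
    have hc1 : (c1 c : Fin m).1 = n - 1 + 1 := rfl
    rcases le_or_gt 1 j with hj1 | hj1
    · rcases le_or_gt j (m : ℤ) with hjm | hjm
      · -- positive range
        rw [xSigned_pos hj1 hjm]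
        rcases eq_or_ne j (n : ℤ) with rfl | hjn
        · rw [if_pos rfl, xSigned_pos (by omega) (by omega)]
          have hswap : Equiv.swap (c0 c) (c1 c) ⟨(((n : ℤ)) - 1).toNat, by omega⟩ =
              (⟨(((n : ℤ)) + 1 - 1).toNat, by omega⟩ : Fin m) := by
            have hL : (⟨(((n : ℤ)) - 1).toNat, by omega⟩ : Fin m) = c0 c := by
              apply Fin.ext
              simp only [hc0, Fin.val_mk]
              omega
            rw [hL, Equiv.swap_apply_left]
            apply Fin.ext
            simp only [hc1, Fin.val_mk]
            omega
          rw [← hswap]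
          exact phiS_mul_xW c _
        · rcases eq_or_ne j ((n : ℤ) + 1) with rfl | hjn1
          · rw [if_neg hjn, if_pos rfl, xSigned_pos (by omega) (by omega)]
            have hswap : Equiv.swap (c0 c) (c1 c) ⟨(((n : ℤ)) + 1 - 1).toNat, by omega⟩ =
                (⟨(((n : ℤ)) - 1).toNat, by omega⟩ : Fin m) := by
              have hL : (⟨(((n : ℤ)) + 1 - 1).toNat, by omega⟩ : Fin m) = c1 c := by
                apply Fin.ext
                simp only [hc1, Fin.val_mk]
                omega
              rw [hL, Equiv.swap_apply_right]
              apply Fin.ext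
              simp only [hc0, Fin.val_mk]
              omega
            rw [← hswap]
            exact phiS_mul_xW c _
          · rw [if_neg hjn, if_neg hjn1, if_neg (show ¬(j = 1 - (n : ℤ)) by omega),
              if_neg (show ¬(j = -(n : ℤ)) by omega), xSigned_pos hj1 hjm]
            have hswap : Equiv.swap (c0 c) (c1 c) ⟨(j - 1).toNat, by omega⟩ =
                (⟨(j - 1).toNat, by omega⟩ : Fin m) := by
              refine Equiv.swap_apply_of_ne_of_ne ?_ ?_ <;>
                · intro hE
                  have hv := congrArg Fin.val hE
                  simp only [hc0, hc1, Fin.val_mk] at hv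
                  omega
            conv_rhs => rw [← hswap]
            exact phiS_mul_xW c _
      · rw [if_neg (show ¬(j = (n : ℤ)) by omega), if_neg (show ¬(j = (n : ℤ) + 1) by omega),
          if_neg (show ¬(j = 1 - (n : ℤ)) by omega), if_neg (show ¬(j = -(n : ℤ)) by omega),
          xSigned_zero (Or.inr hjm), mul_zero, zero_mul]
    · rcases le_or_gt (1 - (m : ℤ)) j with hjm | hjm
      · -- nonpositive range
        rw [xSigned_nonpos hjm (by omega)]
        rcases eq_or_ne j (1 - (n : ℤ)) with rfl | hjn
        · rw [if_neg (show ¬(1 - (n : ℤ) = (n : ℤ)) by omega),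
            if_neg (show ¬(1 - (n : ℤ) = (n : ℤ) + 1) by omega), if_pos rfl,
            xSigned_nonpos (by omega) (by omega)]
          have hswap : Equiv.swap (c0 c) (c1 c) ⟨(-(1 - (n : ℤ))).toNat, by omega⟩ =
              (⟨(-(-(n : ℤ))).toNat, by omega⟩ : Fin m) := by
            have hL : (⟨(-(1 - (n : ℤ))).toNat, by omega⟩ : Fin m) = c0 c := by
              apply Fin.ext
              simp only [hc0, Fin.val_mk]
              omega
            rw [hL, Equiv.swap_apply_left]
            apply Fin.ext
            simp only [hc1, Fin.val_mk]
            omega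
          rw [← hswap]
          exact phiS_mul_neg_xW c _
        · rcases eq_or_ne j (-(n : ℤ)) with rfl | hjn1
          · rw [if_neg (show ¬(-(n : ℤ) = (n : ℤ)) by omega),
              if_neg (show ¬(-(n : ℤ) = (n : ℤ) + 1) by omega), if_neg hjn, if_pos rfl,
              xSigned_nonpos (by omega) (by omega)]
            have hswap : Equiv.swap (c0 c) (c1 c) ⟨(-(-(n : ℤ))).toNat, by omega⟩ =
                (⟨(-(1 - (n : ℤ))).toNat, by omega⟩ : Fin m) := by
              have hL : (⟨(-(-(n : ℤ))).toNat, by omega⟩ : Fin m) = c1 c := by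
                apply Fin.ext
                simp only [hc1, Fin.val_mk]
                omega
              rw [hL, Equiv.swap_apply_right]
              apply Fin.ext
              simp only [hc0, Fin.val_mk]
              omega
            rw [← hswap]
            exact phiS_mul_neg_xW c _
          · rw [if_neg (show ¬(j = (n : ℤ)) by omega), if_neg (show ¬(j = (n : ℤ) + 1) by omega),
              if_neg hjn, if_neg hjn1, xSigned_nonpos hjm (by omega)]
            have hswap : Equiv.swap (c0 c) (c1 c) ⟨(-j).toNat, by omega⟩ =
                (⟨(-j).toNat, by omega⟩ : Fin m) := by
              refine Equiv.swap_apply_of_ne_of_ne ?_ ?_ <;>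
                · intro hE
                  have hv := congrArg Fin.val hE
                  simp only [hc0, hc1, Fin.val_mk] at hv
                  omega
            conv_rhs => rw [← hswap]
            exact phiS_mul_neg_xW c _
      · rw [if_neg (show ¬(j = (n : ℤ)) by omega), if_neg (show ¬(j = (n : ℤ) + 1) by omega),
          if_neg (show ¬(j = 1 - (n : ℤ)) by omega), if_neg (show ¬(j = -(n : ℤ)) by omega),
          xSigned_zero (Or.inl hjm), mul_zero, zero_mul]

/-- Commutation of `φ_w` (along a word) with the signed variables. -/
lemma phiWord_mul_xSigned (l : List (Fin m)) (j : ℤ) :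
    (phiWord k l : VA k p ν m) * xSigned k p ν m j =
      xSigned k p ν m (wordB m l j) * phiWord k l := by
  induction l with
  | nil => simp [phiWord, wordB]
  | cons a t ih =>
    have h1 : phiWord k (p := p) (ν := ν) (a :: t) = phiGen k a * phiWord k t := by
      simp [phiWord]
    have h2 : wordB m (a :: t) j = sB a.1 (wordB m t j) := by
      simp [wordB, Equiv.Perm.mul_apply]
    rw [h1, h2, mul_assoc, ih, ← mul_assoc, phiGen_mul_xSigned, mul_assoc]

end Aux2

/-- For every `w ∈ W^B_m` and `1 ≤ κ ≤ m` (here 0-indexed by `κ : Fin m`,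
so that the paper's position is `κ + 1`), the identity `φ_w x_κ = x_{w(κ)} φ_w` holds in the
VV algebra `W_ν`, where `W^B_m` acts on indices as signed permutations and `x_{1-l} := -x_l`
for the non-positive indices. -/
theorem intertwiner_mul_x (k : Type) [Field k] (p q lam : kˣ)
    (hset : Setting k p q lam) (ν : kˣ →₀ ℕ) (hν : ν ∈ ThetaNNI k p lam)
    (m : ℕ) (hm : ht k ν = 2 * m)
    (w : Equiv.Perm ℤ) (hw : w ∈ WBgrp m) (l : List (Fin m)) (hl : IsRedWord m w l)
    (κ : Fin m) :
    phiWord k l * xW k κ = (xSigned k p ν m (w ((κ.1 : ℤ) + 1)) * phiWord k l : VA k p ν m) := by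
  obtain ⟨hword, -⟩ := hl
  have hx : (xW k κ : VA k p ν m) = xSigned k p ν m ((κ.1 : ℤ) + 1) := by
    rw [xSigned_pos (by omega) (by have := κ.isLt; omega)]
    congr 1
    apply Fin.ext
    show κ.1 = (((κ.1 : ℤ)) + 1 - 1).toNat
    omega
  rw [hx, phiWord_mul_xSigned, hword]

end VVB
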